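/- Every strongly anti-pasch Steiner triple system is anti-pasch. That is, if S is a Steiner triple system of order n with β(S) = C(n,3), then S contains no pasch configuration. -/

import Mathlib

/-- A Steiner quasigroup structure on `X`. -/
def IsSteinerQuasigroup {X : Type*} (star : X → X → X) : Prop :=
  (∀ a, star a a = a) ∧ (∀ a b, star a b = star b a) ∧
    (∀ a b, star a (star a b) = b)

/-- The blocks of the Steiner triple system associated to a Steiner quasigroup:
the 3-element subsets `{a,b,c}` with `a,b,c` distinct and `a ⋆ b = c`. -/
def blocksOf {X : Type*} [DecidableEq X] (star : X → X → X) : Set (Finset X) :=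
  {B | ∃ a b c : X, a ≠ b ∧ a ≠ c ∧ b ≠ c ∧ B = {a, b, c} ∧ star a b = c}

/-- `A(S) = {{a⋆b, b⋆c, c⋆a} : a,b,c pairwise distinct, {a,b,c} ∉ S}`. -/
def ASet {X : Type*} [DecidableEq X] (star : X → X → X) : Set (Finset X) :=
  {B | ∃ a b c : X, a ≠ b ∧ a ≠ c ∧ b ≠ c ∧
    ({a, b, c} : Finset X) ∉ blocksOf star ∧
    B = {star a b, star b c, star c a}}

/-- `B(S) = {{a⋆b, b⋆c, c⋆a} : a,b,c pairwise distinct}`. -/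
def BSet {X : Type*} [DecidableEq X] (star : X → X → X) : Set (Finset X) :=
  {B | ∃ a b c : X, a ≠ b ∧ a ≠ c ∧ b ≠ c ∧
    B = {star a b, star b c, star c a}}

/-- `α(S) = |A(S)|`. -/
noncomputable def alphaInv {X : Type*} [DecidableEq X] (star : X → X → X) : ℕ :=
  (ASet star).ncard

/-- `β(S) = |B(S)|`. -/
noncomputable def betaInv {X : Type*} [DecidableEq X] (star : X → X → X) : ℕ :=
  (BSet star).ncard

/-- A pasch configuration: four blocks `{a, b, c}, {a, d, e}, {f, b, d}, {f, c, e}`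
with `a,b,c,d,e,f` pairwise distinct. -/
def IsPasch {X : Type*} [DecidableEq X] (P : Set (Finset X)) : Prop :=
  ∃ a b c d e f : X, ([a, b, c, d, e, f] : List X).Pairwise (· ≠ ·) ∧
    P = {({a, b, c} : Finset X), {a, d, e}, {f, b, d}, {f, c, e}}

/-- A Steiner triple system is anti-pasch if it contains no pasch configuration. -/
def IsAntiPasch {X : Type*} [DecidableEq X] (star : X → X → X) : Prop :=
  ∀ P : Set (Finset X), IsPasch P → ¬ P ⊆ blocksOf star

/-! ### Auxiliary lemmas -/

section Aux
variable {X : Type*} [DecidableEq X] (star : X → X → X)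

/-- The map `{a,b,c} ↦ {a⋆b, b⋆c, c⋆a}`, well-defined on unordered sets. -/
def PhiMap (s : Finset X) : Finset X :=
  ((s ×ˢ s).filter (fun p => p.1 ≠ p.2)).image (fun p => star p.1 p.2)

variable {star}

lemma steiner_rot (hq : IsSteinerQuasigroup star) {x y z : X}
    (h : star x y = z) : star y z = x := by
  obtain ⟨hid, hcomm, hcan⟩ := hq
  calc star y z = star y (star x y) := by rw [h]
    _ = star y (star y x) := by rw [hcomm x y]
    _ = x := hcan y x

lemma steiner_comm (hq : IsSteinerQuasigroup star) {x y z : X}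
    (h : star x y = z) : star y x = z := (hq.2.1 y x).trans h

lemma PhiMap_triple (hq : IsSteinerQuasigroup star) {a b c : X}
    (hab : a ≠ b) (hac : a ≠ c) (hbc : b ≠ c) :
    PhiMap star {a, b, c} = {star a b, star b c, star c a} := by
  have hcomm := hq.2.1
  ext x
  simp only [PhiMap, Finset.mem_image, Finset.mem_filter, Finset.mem_product,
    Finset.mem_insert, Finset.mem_singleton]
  constructor
  · rintro ⟨⟨p, q⟩, ⟨⟨hp, hq'⟩, hne⟩, rfl⟩
    dsimp only at hp hq' hne ⊢
    rcases hp with rfl | rfl | rfl <;> rcases hq' with rfl | rfl | rfl <;>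
      simp_all <;>
      first
        | exact Or.inl (hcomm _ _)
        | exact Or.inr (Or.inl (hcomm _ _))
        | exact Or.inr (Or.inr (hcomm _ _))
        | exact Or.inr (Or.inl rfl)
        | exact Or.inr (Or.inr rfl)
  · rintro (rfl | rfl | rfl)
    · exact ⟨(a, b), by simp [hab]⟩
    · exact ⟨(b, c), by simp [hbc]⟩
    · exact ⟨(c, a), by simp [Ne.symm hac]⟩

lemma BSet_eq_image (hq : IsSteinerQuasigroup star) :
    BSet star = PhiMap star '' {s : Finset X | s.card = 3} := by
  ext B
  constructor
  · rintro ⟨a, b, c, hab, hac, hbc, rfl⟩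
    exact ⟨{a, b, c}, Finset.card_eq_three.mpr ⟨a, b, c, hab, hac, hbc, rfl⟩,
      PhiMap_triple hq hab hac hbc⟩
  · rintro ⟨s, hs, rfl⟩
    obtain ⟨a, b, c, hab, hac, hbc, rfl⟩ := Finset.card_eq_three.mp hs
    exact ⟨a, b, c, hab, hac, hbc, PhiMap_triple hq hab hac hbc⟩

lemma block_eval (hq : IsSteinerQuasigroup star) {a b c : X}
    (hab : a ≠ b) (hac : a ≠ c) (hbc : b ≠ c)
    (h : ({a, b, c} : Finset X) ∈ blocksOf star) : star a b = c := by
  obtain ⟨a', b', c', h1, h2, h3, heq, p1⟩ := h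
  have p2 : star b' c' = a' := steiner_rot hq p1
  have p3 : star c' a' = b' := steiner_rot hq p2
  have p4 : star b' a' = c' := steiner_comm hq p1
  have p5 : star c' b' = a' := steiner_comm hq p2
  have p6 : star a' c' = b' := steiner_comm hq p3
  have ha : a = a' ∨ a = b' ∨ a = c' := by
    have : a ∈ ({a', b', c'} : Finset X) := by rw [← heq]; simp
    simpa using this
  have hb : b = a' ∨ b = b' ∨ b = c' := by
    have : b ∈ ({a', b', c'} : Finset X) := by rw [← heq]; simp
    simpa using this
  have hc : c = a' ∨ c = b' ∨ c = c' := by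
    have : c ∈ ({a', b', c'} : Finset X) := by rw [← heq]; simp
    simpa using this
  rcases ha with rfl | rfl | rfl <;> rcases hb with rfl | rfl | rfl <;>
    rcases hc with rfl | rfl | rfl <;> simp_all

end Aux

/-- Every strongly anti-pasch Steiner triple system is anti-pasch. -/
theorem stmt10 {X : Type*} [Fintype X] [DecidableEq X]
    (star : X → X → X) (hq : IsSteinerQuasigroup star)
    (n : ℕ) (hcard : Fintype.card X = n)
    (hb : betaInv star = n.choose 3) :
    IsAntiPasch star := by
  rintro P ⟨a, b, c, d, e, f, hpw, rfl⟩ hsub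
  simp only [List.pairwise_cons] at hpw
  obtain ⟨f1, f2, f3, f4, f5, -⟩ := hpw
  have hab : a ≠ b := f1 b (by simp)
  have hac : a ≠ c := f1 c (by simp)
  have had : a ≠ d := f1 d (by simp)
  have hae : a ≠ e := f1 e (by simp)
  have haf : a ≠ f := f1 f (by simp)
  have hbc : b ≠ c := f2 c (by simp)
  have hbd : b ≠ d := f2 d (by simp)
  have hbe : b ≠ e := f2 e (by simp)
  have hbf : b ≠ f := f2 f (by simp)
  have hcd : c ≠ d := f3 d (by simp)
  have hce : c ≠ e := f3 e (by simp)
  have hcf : c ≠ f := f3 f (by simp)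
  have hde : d ≠ e := f4 e (by simp)
  have hdf : d ≠ f := f4 f (by simp)
  have hef : e ≠ f := f5 f (by simp)
  -- the four blocks
  have m1 : ({a, b, c} : Finset X) ∈ blocksOf star := hsub (by simp)
  have m2 : ({a, d, e} : Finset X) ∈ blocksOf star := hsub (by simp)
  have m3 : ({f, b, d} : Finset X) ∈ blocksOf star := hsub (by simp)
  have m4 : ({f, c, e} : Finset X) ∈ blocksOf star := hsub (by simp)
  have e1 : star a b = c := block_eval hq hab hac hbc m1
  have e2 : star a d = e := block_eval hq had hae hde m2
  have e3 : star f b = d := block_eval hq (Ne.symm hbf) (Ne.symm hdf) hbd m3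
  have e4 : star f c = e := block_eval hq (Ne.symm hcf) (Ne.symm hef) hce m4
  -- derived products
  have q1 : star a c = b := steiner_comm hq (steiner_rot hq (steiner_rot hq e1))
  have q2 : star c e = f := steiner_rot hq e4
  have q3 : star e a = d := steiner_rot hq (steiner_rot hq e2)
  have q4 : star b d = f := steiner_rot hq e3
  have q5 : star d f = b := steiner_rot hq q4
  -- collision
  set T3 : Set (Finset X) := {s : Finset X | s.card = 3} with hT3def
  have hs1 : ({a, c, e} : Finset X) ∈ T3 :=
    Finset.card_eq_three.mpr ⟨a, c, e, hac, hae, hce, rfl⟩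
  have hs2 : ({b, d, f} : Finset X) ∈ T3 :=
    Finset.card_eq_three.mpr ⟨b, d, f, hbd, hbf, hdf, rfl⟩
  have hne : ({a, c, e} : Finset X) ≠ ({b, d, f} : Finset X) := by
    intro h
    have : a ∈ ({b, d, f} : Finset X) := by rw [← h]; simp
    simp only [Finset.mem_insert, Finset.mem_singleton] at this
    rcases this with h' | h' | h' <;> [exact hab h'; exact had h'; exact haf h']
  have hcoll : PhiMap star ({a, c, e} : Finset X) = PhiMap star ({b, d, f} : Finset X) := by
    rw [PhiMap_triple hq hac hae hce, PhiMap_triple hq hbd hbf hdf,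
      q1, q2, q3, q4, q5, e3]
    ext x; simp; tauto
  -- T3 has `n.choose 3` elements
  have hT3fin : T3.Finite := Set.toFinite _
  have hT3card : T3.ncard = n.choose 3 := by
    have : T3 = ↑((Finset.univ : Finset X).powersetCard 3) := by
      ext s; simp [hT3def, Finset.mem_powersetCard]
    rw [this, Set.ncard_coe_finset, Finset.card_powersetCard, Finset.card_univ, hcard]
  -- the image of `T3` is strictly smaller than `T3`
  have himg : PhiMap star '' T3 = PhiMap star '' (T3 \ {({a, c, e} : Finset X)}) := by
    apply subset_antisymm
    · rintro x ⟨s, hs, rfl⟩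
      by_cases h : s = ({a, c, e} : Finset X)
      · subst h
        exact ⟨{b, d, f}, ⟨hs2, by simp [Ne.symm hne]⟩, hcoll.symm⟩
      · exact ⟨s, ⟨hs, h⟩, rfl⟩
    · exact Set.image_mono Set.diff_subset
  have hlt : (BSet star).ncard < n.choose 3 := by
    rw [BSet_eq_image hq, himg]
    calc (PhiMap star '' (T3 \ {({a, c, e} : Finset X)})).ncard
        ≤ (T3 \ {({a, c, e} : Finset X)}).ncard :=
          Set.ncard_image_le hT3fin.diff
      _ = T3.ncard - 1 := Set.ncard_diff_singleton_of_mem hs1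
      _ < n.choose 3 := by
          have hpos : 0 < T3.ncard := Set.ncard_pos hT3fin |>.mpr ⟨_, hs1⟩
          omega
  rw [betaInv] at hb
  omega
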